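/- arXiv:2008.00257 — 5 statements merged into one kernel-verified Lean document; each statement's English description precedes it below -/
import Mathlib

section
/- Fix n ∈ ℕ, k > 0, and c ∈ ℝ. The characteristic polynomial of the (2n+3)×(2n+3) Jacobian matrix J(k) of the delayed system at the symmetric equilibrium, where J(k) has first row (0, c, -c, 0, ..., 0), equals (up to sign) g(λ) = (λ+k)^{n+1} (λ(λ+k)^{n+1} - 2ck^{n+1}). -/
open Polynomial Matrix

private lemma sum_ite_val {F : Type*} [AddCommMonoid F] {N : ℕ} (m : ℕ) (f : Fin N → F) :
    (∑ k : Fin N, if (k : ℕ) = m then f k else 0) =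
    if h : m < N then f ⟨m, h⟩ else 0 := by
  by_cases h : m < N
  · rw [dif_pos h, Finset.sum_eq_single (⟨m, h⟩ : Fin N)]
    · simp
    · intro b _ hb
      exact if_neg fun hv => hb (Fin.ext hv)
    · intro hm
      exact absurd (Finset.mem_univ _) hm
  · rw [dif_neg h]
    exact Finset.sum_eq_zero fun k _ => if_neg fun hv => h (by rw [← hv]; exact k.isLt)

private lemma key {F : Type*} [Field F] (n : ℕ) (x K c : F) (hx : x ≠ 0) (hxK : x + K ≠ 0) :
    (Matrix.of fun i j : Fin (2*n+3) =>
      (if (j:ℕ) = (i:ℕ) then (if (i:ℕ) = 0 then x else x + K) else 0)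
      + (if (j:ℕ) = (i:ℕ)+2 then (if (i:ℕ) = 0 then c else -K) else 0)
      + (if (i:ℕ) = 0 ∧ (j:ℕ) = 1 then -c else 0)
      + (if (j:ℕ) = 0 ∧ ((i:ℕ) = 2*n+1 ∨ (i:ℕ) = 2*n+2) then
          (if (i:ℕ) = 2*n+1 then -K else K) else 0)).det
    = x*(x+K)^(2*n+2) - 2*c*K^(n+1)*(x+K)^(n+1) := by
  have hpow : (x + K)^(n+1) ≠ 0 := pow_ne_zero _ hxK
  set r : F := K / (x + K) with hr
  have hxKr : (x + K) * r = K := by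
    rw [hr]; field_simp
  set U : Matrix (Fin (2*n+3)) (Fin (2*n+3)) F := Matrix.of fun i j =>
      (if (j:ℕ) = (i:ℕ) then (if (i:ℕ) = 0 then x else x + K) else 0)
      + (if (j:ℕ) = (i:ℕ)+2 then (if (i:ℕ) = 0 then c else -K) else 0)
      + (if (i:ℕ) = 0 ∧ (j:ℕ) = 1 then -c else 0) with hUdef
  set w : Fin (2*n+3) → F := fun i =>
      if (i:ℕ) = 0 then -(2*c*K^(n+1))/(x*(x+K)^(n+1))
      else (-1:F)^(i:ℕ) * r^(n+2 - ((i:ℕ)+1)/2) with hwdef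
  set v : Fin (2*n+3) → F := fun j => if (j:ℕ) = 0 then 1 else 0 with hvdef
  have hwm : ∀ (m : ℕ) (hm : m < 2*n+3), m ≠ 0 →
      w ⟨m, hm⟩ = (-1:F)^m * r^(n+2 - (m+1)/2) := by
    intro m hm h0
    simp only [hwdef]
    rw [if_neg h0]
  have hw0 : ∀ (hm : (0:ℕ) < 2*n+3), w ⟨0, hm⟩ = -(2*c*K^(n+1))/(x*(x+K)^(n+1)) := by
    intro hm
    simp only [hwdef]
    norm_num
  have hUw : ∀ i : Fin (2*n+3), (∑ k, U i k * w k)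
      = (if (i:ℕ) = 2*n+1 then -K else if (i:ℕ) = 2*n+2 then K else 0) := by
    intro i
    by_cases hi0 : (i:ℕ) = 0
    · have hsplit : ∀ k : Fin (2*n+3), U i k * w k =
          ((if (k:ℕ) = 0 then x * w k else 0)
          + (if (k:ℕ) = 2 then c * w k else 0))
          + (if (k:ℕ) = 1 then -c * w k else 0) := by
        intro k
        simp only [hUdef, Matrix.of_apply, hi0, true_and]
        split_ifs <;> first | (exfalso; omega) | ring
      rw [Finset.sum_congr rfl fun k _ => hsplit k, Finset.sum_add_distrib,
        Finset.sum_add_distrib, sum_ite_val, sum_ite_val, sum_ite_val,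
        dif_pos (by omega : (0:ℕ) < 2*n+3), dif_pos (by omega : (2:ℕ) < 2*n+3),
        dif_pos (by omega : (1:ℕ) < 2*n+3),
        hw0, hwm 2 (by omega) (by omega), hwm 1 (by omega) (by omega),
        if_neg (by omega), if_neg (by omega)]
      have e2 : n + 2 - (2+1)/2 = n+1 := by norm_num
      simp only [e2, hr, div_pow]
      field_simp
      ring
    · by_cases hmid : (i:ℕ) ≤ 2*n
      · have h1 : 1 ≤ (i:ℕ) := by omega
        have hsplit : ∀ k : Fin (2*n+3), U i k * w k =
            (if (k:ℕ) = (i:ℕ) then (x+K) * w k else 0)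
            + (if (k:ℕ) = (i:ℕ)+2 then (-K) * w k else 0) := by
          intro k
          simp only [hUdef, Matrix.of_apply]
          split_ifs <;> first | (exfalso; omega) | ring
        rw [Finset.sum_congr rfl fun k _ => hsplit k, Finset.sum_add_distrib,
          sum_ite_val, sum_ite_val,
          dif_pos (by omega : (i:ℕ) < 2*n+3), dif_pos (by omega : (i:ℕ)+2 < 2*n+3),
          hwm (i:ℕ) (by omega) (by omega), hwm ((i:ℕ)+2) (by omega) (by omega),
          if_neg (by omega), if_neg (by omega)]
        have he1 : n + 2 - ((i:ℕ)+1)/2 = (n + 2 - ((i:ℕ)+2+1)/2) + 1 := by omega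
        rw [he1]
        set e := n + 2 - ((i:ℕ)+2+1)/2 with hedef
        linear_combination ((-1:F)^(i:ℕ) * r^e) * hxKr
      · have hcase : (i:ℕ) = 2*n+1 ∨ (i:ℕ) = 2*n+2 := by
          have := i.isLt; omega
        have hsplit : ∀ k : Fin (2*n+3), U i k * w k =
            (if (k:ℕ) = (i:ℕ) then (x+K) * w k else 0)
            + (if (k:ℕ) = (i:ℕ)+2 then (-K) * w k else 0) := by
          intro k
          simp only [hUdef, Matrix.of_apply]
          split_ifs <;> first | (exfalso; omega) | ring
        rw [Finset.sum_congr rfl fun k _ => hsplit k, Finset.sum_add_distrib,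
          sum_ite_val, sum_ite_val,
          dif_pos (by omega : (i:ℕ) < 2*n+3), dif_neg (by omega : ¬ ((i:ℕ)+2 < 2*n+3)),
          hwm (i:ℕ) (by omega) (by omega)]
        rcases hcase with hc | hc
        · rw [if_pos hc, hc]
          have he : n + 2 - (2*n+1+1)/2 = 1 := by omega
          rw [he, pow_one]
          have hneg : (-1:F)^(2*n+1) = -1 := by
            rw [pow_succ, pow_mul]
            norm_num
          rw [hneg]
          linear_combination -hxKr
        · rw [if_neg (by omega), if_pos hc, hc]
          have he : n + 2 - (2*n+2+1)/2 = 1 := by omega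
          rw [he, pow_one]
          have hneg : (-1:F)^(2*n+2) = 1 := by
            rw [show 2*n+2 = 2*(n+1) by ring, pow_mul]
            norm_num
          rw [hneg]
          linear_combination hxKr
  have hfact : (Matrix.of fun i j : Fin (2*n+3) =>
      (if (j:ℕ) = (i:ℕ) then (if (i:ℕ) = 0 then x else x + K) else 0)
      + (if (j:ℕ) = (i:ℕ)+2 then (if (i:ℕ) = 0 then c else -K) else 0)
      + (if (i:ℕ) = 0 ∧ (j:ℕ) = 1 then -c else 0)
      + (if (j:ℕ) = 0 ∧ ((i:ℕ) = 2*n+1 ∨ (i:ℕ) = 2*n+2) then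
          (if (i:ℕ) = 2*n+1 then -K else K) else 0))
      = U * (1 + Matrix.replicateCol Unit w * Matrix.replicateRow Unit v) := by
    rw [Matrix.mul_add, Matrix.mul_one, ← Matrix.mul_assoc]
    ext i j
    have hcol : (U * Matrix.replicateCol Unit w * Matrix.replicateRow Unit v) i j
        = (∑ k, U i k * w k) * v j := by
      simp [Matrix.mul_apply, Matrix.replicateCol_apply, Matrix.replicateRow_apply, Finset.sum_mul]
    rw [Matrix.add_apply, hcol, hUw i]
    simp only [hUdef, hvdef, Matrix.of_apply]
    split_ifs <;> first | (exfalso; omega) | ring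
  rw [hfact, Matrix.det_mul, Matrix.det_one_add_replicateCol_mul_replicateRow]
  have hdot : v ⬝ᵥ w = -(2*c*K^(n+1))/(x*(x+K)^(n+1)) := by
    have hterm : ∀ k : Fin (2*n+3), v k * w k = if (k:ℕ) = 0 then w k else 0 := by
      intro k
      simp only [hvdef]
      split_ifs <;> ring
    rw [dotProduct, Finset.sum_congr rfl fun k _ => hterm k, sum_ite_val,
      dif_pos (by omega : (0:ℕ) < 2*n+3), hw0]
  have hdetU : U.det = x * (x+K)^(2*n+2) := by
    have ht : U.BlockTriangular id := by
      intro i j hij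
      have hij' : (j:ℕ) < (i:ℕ) := hij
      simp only [hUdef, Matrix.of_apply]
      rw [if_neg (by omega), if_neg (by omega), if_neg (by omega)]
      norm_num
    rw [Matrix.det_of_upperTriangular ht]
    have hdiag : ∀ i : Fin (2*n+3), U i i = if (i:ℕ) = 0 then x else x + K := by
      intro i
      simp only [hUdef, Matrix.of_apply]
      rw [if_neg (by omega : ¬ ((i:ℕ) = (i:ℕ) + 2)), if_neg (by omega : ¬ ((i:ℕ) = 0 ∧ (i:ℕ) = 1)),
        add_zero, add_zero, if_pos trivial]
    rw [Finset.prod_congr rfl fun i _ => hdiag i,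
      ← Finset.mul_prod_erase Finset.univ _ (Finset.mem_univ (0 : Fin (2*n+3)))]
    have h0 : (if ((0 : Fin (2*n+3)) : ℕ) = 0 then x else x + K) = x := by
      simp
    have h2 : ∀ i ∈ Finset.univ.erase (0 : Fin (2*n+3)),
        (if (i:ℕ) = 0 then x else x + K) = x + K := by
      intro i hi
      rw [if_neg]
      intro h
      exact (Finset.mem_erase.mp hi).1 (Fin.ext (by rw [h]; simp))
    rw [h0, Finset.prod_congr rfl h2, Finset.prod_const,
      Finset.card_erase_of_mem (Finset.mem_univ _), Finset.card_univ, Fintype.card_fin]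
    norm_num
  rw [hdetU, hdot]
  field_simp
  ring

/-- The characteristic polynomial of the `(2n+3)×(2n+3)` Jacobian
`J(k)` of the delayed system at the symmetric equilibrium equals
`(λ+k)^{n+1} (λ(λ+k)^{n+1} - 2ck^{n+1})`.  Variables are ordered
`(m, γ⁽ⁿ⁾, η⁽ⁿ⁾, γ⁽ⁿ⁻¹⁾, η⁽ⁿ⁻¹⁾, …, γ⁽⁰⁾, η⁽⁰⁾)`. -/
theorem stmt6 (n : ℕ) (k : ℝ) (hk : 0 < k) (c : ℝ) :
    let J : Matrix (Fin (2*n+3)) (Fin (2*n+3)) ℝ := Matrix.of fun i j =>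
      if i.val = 0 then
        (if j.val = 1 then c else if j.val = 2 then -c else 0)
      else if i.val = j.val then -k
      else if j.val = i.val + 2 then k
      else if i.val = 2*n+1 ∧ j.val = 0 then k
      else if i.val = 2*n+2 ∧ j.val = 0 then -k
      else 0
    J.charpoly = (X + C k)^(n+1) * (X * (X + C k)^(n+1) - C (2*c*k^(n+1))) := by
  intro J
  have hinj := IsFractionRing.injective (Polynomial ℝ) (RatFunc ℝ)
  apply hinj
  set φ := algebraMap (Polynomial ℝ) (RatFunc ℝ) with hφ
  have hx : φ X ≠ 0 := by
    intro h
    exact Polynomial.X_ne_zero (hinj (by rw [h, map_zero]))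
  have hxK : φ X + φ (C k) ≠ 0 := by
    rw [← map_add]
    intro h
    exact Polynomial.X_add_C_ne_zero k (hinj (by rw [h, map_zero]))
  rw [Matrix.charpoly, RingHom.map_det]
  have hchar : (charmatrix J).map φ = Matrix.of fun i j : Fin (2*n+3) =>
      (if (j:ℕ) = (i:ℕ) then (if (i:ℕ) = 0 then φ X else φ X + φ (C k)) else 0)
      + (if (j:ℕ) = (i:ℕ)+2 then (if (i:ℕ) = 0 then φ (C c) else -(φ (C k))) else 0)
      + (if (i:ℕ) = 0 ∧ (j:ℕ) = 1 then -(φ (C c)) else 0)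
      + (if (j:ℕ) = 0 ∧ ((i:ℕ) = 2*n+1 ∨ (i:ℕ) = 2*n+2) then
          (if (i:ℕ) = 2*n+1 then -(φ (C k)) else φ (C k)) else 0) := by
    ext i j
    rw [Matrix.map_apply, charmatrix_apply, Matrix.diagonal_apply]
    have hJ : J = Matrix.of fun i j : Fin (2*n+3) =>
      (if i.val = 0 then
        (if j.val = 1 then c else if j.val = 2 then -c else 0)
      else if i.val = j.val then -k
      else if j.val = i.val + 2 then k
      else if i.val = 2*n+1 ∧ j.val = 0 then k
      else if i.val = 2*n+2 ∧ j.val = 0 then -k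
      else 0) := rfl
    rw [hJ]
    simp only [Matrix.of_apply, Fin.ext_iff]
    split_ifs <;>
      first
      | (exfalso; omega)
      | (simp only [map_sub, map_neg, map_zero, map_add, Polynomial.C_0, Polynomial.C_neg];
         ring)
  rw [RingHom.mapMatrix_apply, hchar, key n (φ X) (φ (C k)) (φ (C c)) hx hxK]
  simp only [_root_.map_mul, map_pow, _root_.map_add, map_sub, Polynomial.C_mul, Polynomial.C_pow, map_ofNat]
  ring
end

section
/- Let k > 0, n ∈ ℕ, a > 0. The characteristic polynomial of the (n+2)×(n+2) matrix J(k) with first row (0, -a/4, 0,...,0), a subdiagonal delay chain (rows 2 through n+1 of the form -k on the diagonal, k on the superdiagonal), and last row (2k, 0,...,0, -k), is p(λ) = λ(λ+k)^{n+1} + (a/2)k^{n+1}. -/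
open Polynomial

/-- The characteristic polynomial of the `(n+2)×(n+2)` Jacobian of
the reduced delayed linear competitive model at `(1/2,0,…,0)` is
`λ(λ+k)^{n+1} + (a/2)k^{n+1}`. -/
theorem stmt8 (n : ℕ) (k : ℝ) (hk : 0 < k) (a : ℝ) (ha : 0 < a) :
    let J : Matrix (Fin (n+2)) (Fin (n+2)) ℝ := Matrix.of fun i j =>
      if i.val = 0 ∧ j.val = 1 then -a/4
      else if 1 ≤ i.val ∧ i.val = j.val then -k
      else if 1 ≤ i.val ∧ j.val = i.val + 1 then k
      else if i.val = n+1 ∧ j.val = 0 then 2*k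
      else 0
    J.charpoly = X * (X + C k)^(n+1) + C (a/2 * k^(n+1)) := by
  intro J
  have hJ : ∀ i j : Fin (n+2), J i j =
      if i.val = 0 ∧ j.val = 1 then -a/4
      else if 1 ≤ i.val ∧ i.val = j.val then -k
      else if 1 ≤ i.val ∧ j.val = i.val + 1 then k
      else if i.val = n+1 ∧ j.val = 0 then 2*k
      else 0 := fun i j => rfl
  have h0last : (0 : Fin (n+2)) ≠ Fin.last (n+1) := by
    simp [Fin.ext_iff, Fin.val_last]
  rw [Matrix.charpoly, Matrix.det_succ_column_zero]
  have hzero : ∀ i : Fin (n+2), i ∈ Finset.univ →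
      i ∉ ({0, Fin.last (n+1)} : Finset (Fin (n+2))) →
      (-1:ℝ[X])^(i:ℕ) * (J.charmatrix i 0) *
        ((J.charmatrix.submatrix i.succAbove Fin.succ).det) = 0 := by
    intro i _ hi
    simp only [Finset.mem_insert, Finset.mem_singleton] at hi
    push_neg at hi
    have h2 : i.val ≠ 0 := fun h => hi.1 (Fin.ext h)
    have h3 : i.val ≠ n+1 := fun h => hi.2 (Fin.ext (by simpa [Fin.val_last] using h))
    rw [Matrix.charmatrix_apply_ne _ _ _ hi.1, hJ]
    have : (¬((i:ℕ) = 0 ∧ (0:Fin (n+2)).val = 1)) := by simp [h2]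
    rw [if_neg this, if_neg (by simp [h2] : ¬(1 ≤ i.val ∧ i.val = (0:Fin (n+2)).val)),
      if_neg (by simp : ¬(1 ≤ i.val ∧ (0:Fin (n+2)).val = i.val + 1)),
      if_neg (by simp [h3] : ¬(i.val = n+1 ∧ (0:Fin (n+2)).val = 0))]
    simp
  rw [← Finset.sum_subset (Finset.subset_univ {0, Fin.last (n+1)}) hzero,
    Finset.sum_pair h0last]
  -- first term
  have t1 : (-1:ℝ[X])^((0 : Fin (n+2)):ℕ) * (J.charmatrix 0 0) *
      ((J.charmatrix.submatrix (0 : Fin (n+2)).succAbove Fin.succ).det)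
      = X * (X + C k)^(n+1) := by
    have hd : (J.charmatrix.submatrix (0 : Fin (n+2)).succAbove Fin.succ).det
        = (X + C k)^(n+1) := by
      rw [Fin.succAbove_zero]
      rw [Matrix.det_of_upperTriangular]
      · have : ∀ i : Fin (n+1), (J.charmatrix.submatrix Fin.succ Fin.succ) i i
            = X + C k := by
          intro i
          simp only [Matrix.submatrix_apply, Matrix.charmatrix_apply_eq]
          rw [hJ]
          rw [if_neg (by simp : ¬((i.succ : ℕ) = 0 ∧ (i.succ:ℕ) = 1)),
            if_pos (by simp [Fin.val_succ] : (1 ≤ (i.succ:ℕ) ∧ (i.succ:ℕ) = (i.succ:ℕ)))]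
          rw [map_neg, sub_neg_eq_add]
        rw [Finset.prod_congr rfl (fun i _ => this i)]
        simp
      · intro i j hij
        simp only [id] at hij
        simp only [Matrix.submatrix_apply]
        rw [Matrix.charmatrix_apply_ne _ _ _ (by simp [Fin.ext_iff, Fin.val_succ]; omega)]
        rw [hJ]
        have hij' : (j:ℕ) < (i:ℕ) := hij
        rw [if_neg (by simp [Fin.val_succ]), if_neg (by simp [Fin.val_succ]; omega),
          if_neg (by simp [Fin.val_succ]; omega), if_neg (by simp [Fin.val_succ])]
        simp
    rw [hd, Matrix.charmatrix_apply_eq, hJ]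
    rw [if_neg (by simp), if_neg (by simp), if_neg (by simp), if_neg (by simp [Nat.succ_ne_zero])]
    simp
  -- second term
  have t2 : (-1:ℝ[X])^((Fin.last (n+1) : Fin (n+2)):ℕ) * (J.charmatrix (Fin.last (n+1)) 0) *
      ((J.charmatrix.submatrix (Fin.last (n+1)).succAbove Fin.succ).det)
      = C (a/2 * k^(n+1)) := by
    have hd : (J.charmatrix.submatrix (Fin.last (n+1)).succAbove Fin.succ).det
        = C (a/4) * (- C k)^n := by
      rw [Fin.succAbove_last]
      rw [Matrix.det_of_lowerTriangular]
      · rw [Fin.prod_univ_succ]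
        have h00 : (J.charmatrix.submatrix Fin.castSucc Fin.succ) 0 0 = C (a/4) := by
          simp only [Matrix.submatrix_apply]
          rw [Matrix.charmatrix_apply_ne _ _ _ (by simp [Fin.ext_iff])]
          rw [hJ]
          rw [if_pos (by simp)]
          rw [show -a/4 = -(a/4) by ring, map_neg, neg_neg]
        have hss : ∀ i : Fin n, (J.charmatrix.submatrix Fin.castSucc Fin.succ) i.succ i.succ
            = - C k := by
          intro i
          simp only [Matrix.submatrix_apply]
          rw [Matrix.charmatrix_apply_ne _ _ _ (by simp [Fin.ext_iff, Fin.val_succ])]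
          rw [hJ]
          rw [if_neg (by simp [Fin.val_succ]), if_neg (by simp [Fin.val_succ]),
            if_pos (by simp [Fin.val_succ] : (1 ≤ ((i.succ.castSucc : Fin (n+2)):ℕ) ∧ ((i.succ.succ : Fin (n+2)):ℕ) = ((i.succ.castSucc : Fin (n+2)):ℕ) + 1))]
        rw [h00, Finset.prod_congr rfl (fun i _ => hss i)]
        simp
      · intro i j hij
        have hij' : (i:ℕ) < (j:ℕ) := hij
        simp only [Matrix.submatrix_apply]
        rw [Matrix.charmatrix_apply_ne _ _ _ (by simp [Fin.ext_iff]; omega)]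
        rw [hJ]
        have hi : (i:ℕ) < n+1 := i.isLt
        rw [if_neg (by simp; all_goals omega), if_neg (by simp; all_goals omega),
          if_neg (by simp; all_goals omega), if_neg (by simp; all_goals omega)]
        simp
    rw [hd, Matrix.charmatrix_apply_ne _ _ _ (by simp [Fin.ext_iff, Fin.val_last]), hJ]
    rw [if_neg (by simp [Fin.val_last]), if_neg (by simp [Fin.val_last]),
      if_neg (by simp [Fin.val_last]), if_pos (by simp [Fin.val_last])]
    have hv : ((Fin.last (n+1) : Fin (n+2)):ℕ) = n+1 := Fin.val_last _
    rw [hv, neg_pow (C k) n]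
    have : ((-1:ℝ[X]))^(n+1) * (-1)^n = -1 := by
      rw [← pow_add]
      exact Odd.neg_one_pow ⟨n, by ring⟩
    calc (-1:ℝ[X])^(n+1) * (-C (2*k)) * (C (a/4) * ((-1)^n * C k ^ n))
        = ((-1:ℝ[X])^(n+1) * (-1)^n) * (C (2*k) * C (a/4) * C k ^ n) * (-1) := by ring
      _ = C (2*k) * C (a/4) * C k ^ n := by rw [this]; ring
      _ = C (a/2 * k^(n+1)) := by
          rw [← C_pow, ← C_mul, ← C_mul]
          congr 1
          ring
  rw [t1, t2]
end

section
/- Let a > 0 and k > (9/16)a. Then every root of the polynomial p(λ) = λ⁴ + 3kλ³ + 3k²λ² + k³λ + (a/2)k³ has strictly negative real part. -/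
/-- For `a > 0` and `k > (9/16)a`, every root of
`λ⁴ + 3kλ³ + 3k²λ² + k³λ + (a/2)k³` has strictly negative real part. -/
theorem stmt12 (a k : ℝ) (ha : 0 < a) (hk : (9/16)*a < k) :
    ∀ z : ℂ, z^4 + 3*(k:ℂ)*z^3 + 3*(k:ℂ)^2*z^2 + (k:ℂ)^3*z + (a/2 : ℝ)*(k:ℂ)^3 = 0
      → z.re < 0 := by
  have hk0 : 0 < k := lt_trans (by positivity) hk
  intro z hz
  by_contra h
  push_neg at h
  set x := z.re with hx
  set y := z.im with hy
  have hzxy : z = (x : ℂ) + (y : ℂ) * Complex.I := (Complex.re_add_im z).symm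
  clear_value x y
  rw [hzxy] at hz
  have h1 := congrArg Complex.re hz
  have h2 := congrArg Complex.im hz
  simp [Complex.ext_iff, pow_succ, Complex.add_re, Complex.add_im, Complex.mul_re,
    Complex.mul_im] at h1 h2
  have hre : x^4 - 6*x^2*y^2 + y^4 + 3*k*(x^3 - 3*x*y^2) + 3*k^2*(x^2 - y^2)
      + k^3*x + (a/2)*k^3 = 0 := by linear_combination h1
  have him : y * (4*x^3 - 4*x*y^2 + 9*k*x^2 - 3*k*y^2 + 6*k^2*x + k^3) = 0 := by
    linear_combination h2
  rcases mul_eq_zero.mp him with hy0 | hfac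
  · rw [hy0] at hre
    nlinarith [pow_pos hk0 3, sq_nonneg x, mul_nonneg h (sq_nonneg x),
      mul_nonneg (mul_nonneg h h) h, pow_nonneg h 4, mul_pos (mul_pos hk0 hk0) hk0]
  · -- y^2 * (4x+3k) = 4x^3+9kx^2+6k^2x+k^3
    have hQ : y^2 * (4*x + 3*k) - (4*x^3 + 9*k*x^2 + 6*k^2*x + k^3) = 0 := by
      linear_combination -hfac
    have hF : (9/2)*a*k^5 - 8*k^6 + 12*a*k^4*x - 72*k^5*x + 8*a*k^3*x^2 - 264*k^4*x^2
        - 504*k^3*x^3 - 528*k^2*x^4 - 288*k*x^5 - 64*x^6 = 0 := by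
      linear_combination (4*x+3*k)^2 * hre
        - (y^2*(4*x+3*k) + (4*x^3+9*k*x^2+6*k^2*x+k^3)
            - (6*x^2+9*k*x+3*k^2)*(4*x+3*k)) * hQ
    have hA : 0 < k^5 * (16*k - 9*a) := by nlinarith [pow_pos hk0 5]
    have h6 : 0 ≤ 6*k - a := by linarith
    have h33 : 0 ≤ 33*k - a := by linarith
    have hB : 0 ≤ k^4*x * (6*k - a) := mul_nonneg (by positivity) h6
    have hC : 0 ≤ k^3*x^2 * (33*k - a) := mul_nonneg (by positivity) h33
    have hD : 0 ≤ k^3*x^3 := by positivity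
    have hE : 0 ≤ k^2*x^4 := by positivity
    have hG : 0 ≤ k*x^5 := by positivity
    have hH : 0 ≤ x^6 := by positivity
    linarith [hA, hB, hC, hD, hE, hG, hH, hF]
end

section
/- Let a > 0 and k* = (9/16)a. Then the polynomial λ⁴ + 3k*λ³ + 3(k*)²λ² + (k*)³λ + (a/2)(k*)³ has a pair of purely imaginary nonzero roots. -/
/-- For `a > 0` and `k* = (9/16)a`, the polynomial
`λ⁴ + 3k*λ³ + 3k*²λ² + k*³λ + (a/2)k*³` has a pair of purely imaginary
nonzero roots `±iω`. -/
theorem stmt13 (a : ℝ) (ha : 0 < a) :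
    let kstar : ℝ := (9/16)*a
    let p : ℂ → ℂ := fun z =>
      z^4 + 3*(kstar:ℂ)*z^3 + 3*(kstar:ℂ)^2*z^2 + (kstar:ℂ)^3*z + ((a/2 : ℝ):ℂ)*(kstar:ℂ)^3
    ∃ ω : ℝ, 0 < ω ∧ p (Complex.I * ω) = 0 ∧ p (-(Complex.I * ω)) = 0 := by
  intro kstar p
  set ω : ℝ := Real.sqrt (27*a^2/256) with hωdef
  have hpos : 0 < ω := Real.sqrt_pos.mpr (by positivity)
  have hωsq : (ω:ℂ)^2 = 27*(a:ℂ)^2/256 := by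
    have : ω^2 = 27*a^2/256 := Real.sq_sqrt (by positivity)
    rw [← Complex.ofReal_pow, this]
    push_cast
    ring
  have hI : (Complex.I)^2 = -1 := Complex.I_sq
  refine ⟨ω, hpos, ?_, ?_⟩
  · simp only [p, kstar]
    push_cast
    linear_combination ((ω:ℂ)^4*(Complex.I^2-1) + 3*(9*(a:ℂ)/16)*(ω:ℂ)^3*Complex.I
        + 3*(9*(a:ℂ)/16)^2*(ω:ℂ)^2) * hI
      + ((ω:ℂ)^2 + 27*(a:ℂ)^2/256 - 3*(9*(a:ℂ)/16)*(ω:ℂ)*Complex.I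
        - 3*(9*(a:ℂ)/16)^2) * hωsq
  · simp only [p, kstar]
    push_cast
    linear_combination ((ω:ℂ)^4*(Complex.I^2-1) - 3*(9*(a:ℂ)/16)*(ω:ℂ)^3*Complex.I
        + 3*(9*(a:ℂ)/16)^2*(ω:ℂ)^2) * hI
      + ((ω:ℂ)^2 + 27*(a:ℂ)^2/256 + 3*(9*(a:ℂ)/16)*(ω:ℂ)*Complex.I
        - 3*(9*(a:ℂ)/16)^2) * hωsq
end

section
/- Let X be a birth-death process on E_N = {i/N : 0 ≤ i ≤ N} with birth rates r⁺(x) ≥ 0 and death rates r⁻(x) ≥ 0 satisfying r⁺(0) = r⁻(0) = 0, and suppose there exist ε̄ > 0 and δ > 0 with r⁻(x) ≥ (1+δ)r⁺(x) for all x ∈ E_N ∩ (0, 2ε̄]. Then for C = log(1+δ) and any starting point x < ε̄, P_x(sup_{t≥0} X(t) > 2ε̄) < ε̄ N e^{-ε̄ C N}. -/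
open MeasureTheory

open MeasureTheory

noncomputable def a17 (δ : ℝ) (n i : ℕ) : ℝ := (1+δ)^(min i n) - 1

lemma a17_nonneg (δ : ℝ) (hδ : 0 < δ) (n i : ℕ) : 0 ≤ a17 δ n i := by
  have : (1:ℝ) ≤ (1+δ)^(min i n) := one_le_pow₀ (by linarith)
  simp [a17]; linarith

lemma a17_mono (δ : ℝ) (hδ : 0 < δ) (n : ℕ) {i j : ℕ} (h : i ≤ j) :
    a17 δ n i ≤ a17 δ n j := by
  have := pow_le_pow_right₀ (by linarith : (1:ℝ) ≤ 1+δ) (min_le_min_right n h)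
  simp only [a17]; linarith

lemma aux_pow17 (δ : ℝ) (hδ : 0 ≤ δ) : ∀ k : ℕ, (1+δ)^(k+1) - 1 ≤ δ*(k+1)*(1+δ)^k := by
  intro k
  induction k with
  | zero => simp
  | succ k ih =>
    have hA : (0:ℝ) ≤ (1+δ)^k := by positivity
    have h1 : (1+δ)^(k+1) = (1+δ)*(1+δ)^k := by ring
    have h2 : (1+δ)^(k+1+1) = (1+δ)*((1+δ)*(1+δ)^k) := by ring
    push_cast at ih ⊢
    rw [h2, h1]
    rw [h1] at ih
    have hAge : (1:ℝ) ≤ (1+δ)^k := one_le_pow₀ (by linarith)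
    nlinarith [mul_le_mul_of_nonneg_left ih (show (0:ℝ) ≤ 1+δ by linarith),
      mul_nonneg hδ (sub_nonneg.mpr hAge), mul_nonneg (mul_nonneg hδ hδ) hA]

lemma step_coeff (δ : ℝ) (hδ : 0 < δ) (n j : ℕ) (hj : 1 ≤ j) (p q : ℝ)
    (hp : 0 ≤ p) (hq : 0 ≤ q) (hpq : p + q = 1)
    (hdr : j ≤ n → (1+δ)*p ≤ q) :
    a17 δ n (j+1) * p + a17 δ n (j-1) * q + (if j = n then δ*(1+δ)^n * p else 0)
      ≤ a17 δ n j := by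
  obtain ⟨j, rfl⟩ := Nat.exists_eq_add_of_le hj
  have hj1 : 1 + j - 1 = j := by omega
  rcases lt_trichotomy (1+j) n with hlt | heq | hgt
  · have hdr' := hdr (le_of_lt hlt)
    have hp2 : p * (2+δ) ≤ 1 := by nlinarith
    have hmin1 : min (1+j+1) n = 1+j+1 := min_eq_left (by omega)
    have hmin2 : min (1+j-1) n = j := by omega
    have hmin3 : min (1+j) n = 1+j := min_eq_left (by omega)
    have hC : (0:ℝ) < (1+δ)^j := by positivity
    simp only [a17, hmin1, hmin2, hmin3, if_neg (by omega : ¬ 1+j = n)]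
    have e1 : (1+δ)^(1+j+1) = (1+δ)^j * ((1+δ)*(1+δ)) := by ring
    have e2 : (1+δ)^(1+j) = (1+δ)^j * (1+δ) := by ring
    rw [e1, e2]
    nlinarith [mul_le_mul_of_nonneg_left hp2 (mul_pos hC hδ).le]
  · subst heq
    have hdr' := hdr le_rfl
    have hp2 : p * (2+δ) ≤ 1 := by nlinarith
    have hmin1 : min (1+j+1) (1+j) = 1+j := min_eq_right (by omega)
    have hmin2 : min (1+j-1) (1+j) = j := by omega
    have hmin3 : min (1+j) (1+j) = 1+j := min_self _
    have hC : (0:ℝ) < (1+δ)^j := by positivity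
    simp only [a17, hmin1, hmin2, hmin3, if_pos rfl, if_true, ite_true]
    have e2 : (1+δ)^(1+j) = (1+δ)^j * (1+δ) := by ring
    rw [e2]
    nlinarith [mul_le_mul_of_nonneg_left hp2 (mul_pos hC hδ).le]
  · have hmin1 : min (1+j+1) n = n := min_eq_right (by omega)
    have hmin3 : min (1+j) n = n := min_eq_right (by omega)
    have hmono : a17 δ n (1+j-1) ≤ a17 δ n (1+j) := a17_mono δ hδ n (by omega)
    have hA : a17 δ n (1+j+1) = a17 δ n (1+j) := by simp [a17, hmin1, hmin3]
    rw [hA, if_neg (by omega : ¬ 1+j = n)]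
    have h0 : 0 ≤ a17 δ n (1+j) := a17_nonneg δ hδ n _
    have h0' : 0 ≤ a17 δ n (1+j-1) := a17_nonneg δ hδ n _
    simp only [a17] at *
    nlinarith

lemma final17 (δ εb : ℝ) (N : ℕ) (hδ : 0 < δ) (hεb : 0 < εb) (hN : 0 < N)
    (i0 : ℕ) (hi0 : (i0:ℝ) < εb * N) :
    ((1+δ)^i0 - 1) / (δ * (1+δ)^(Nat.floor (2*εb*(N:ℝ)))) <
      εb * N * Real.exp (-(εb * Real.log (1+δ) * N)) := by
  set n := Nat.floor (2*εb*(N:ℝ)) with hn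
  have hb : (1:ℝ) < 1+δ := by linarith
  have hNR : (0:ℝ) < N := Nat.cast_pos.mpr hN
  have ht : (0:ℝ) < εb*N := mul_pos hεb hNR
  have hden : (0:ℝ) < δ * (1+δ)^n := by positivity
  have hexp : Real.exp (-(εb * Real.log (1+δ) * N)) = (1+δ) ^ (-(εb*(N:ℝ))) := by
    rw [Real.rpow_def_of_pos (by linarith)]
    congr 1; ring
  rw [hexp, div_lt_iff₀ hden]
  have hrpos : (0:ℝ) < (1+δ) ^ (-(εb*(N:ℝ))) := Real.rpow_pos_of_pos (by linarith) _
  rcases Nat.eq_zero_or_pos i0 with h0 | hposi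
  · rw [h0]
    simp only [pow_zero, sub_self]
    positivity
  · obtain ⟨k, rfl⟩ : ∃ k, i0 = k+1 := ⟨i0-1, by omega⟩
    have hfl : 2*εb*(N:ℝ) < n + 1 := Nat.lt_floor_add_one _
    have hi0' : (k:ℝ) + 1 < εb*N := by push_cast at hi0; linarith
    have hk : (k:ℝ) ≤ (n:ℝ) - εb*N := by linarith
    have hrw : ((1+δ)^(k+1) - 1 : ℝ) ≤ δ*((k:ℝ)+1)*(1+δ)^((k:ℝ)) := by
      have h := aux_pow17 δ hδ.le k
      rw [Real.rpow_natCast]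
      push_cast at h
      linarith
    calc (1+δ)^(k+1) - 1 ≤ δ*((k:ℝ)+1)*(1+δ)^((k:ℝ)) := hrw
      _ < δ*(εb*N)*(1+δ)^((k:ℝ)) := by
          apply mul_lt_mul_of_pos_right _ (Real.rpow_pos_of_pos (by linarith) _)
          nlinarith
      _ ≤ δ*(εb*N)*(1+δ)^((n:ℝ)-εb*N) := by
          apply mul_le_mul_of_nonneg_left
            (Real.rpow_le_rpow_of_exponent_le hb.le hk) (by positivity)
      _ = εb*(N:ℝ)*(1+δ)^(-(εb*(N:ℝ))) * (δ*(1+δ)^n) := by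
          rw [show ((n:ℝ) - εb*N) = -(εb*(N:ℝ)) + n by ring,
            Real.rpow_add (by linarith : (0:ℝ) < 1+δ), Real.rpow_natCast]
          ring

/-- For a birth–death chain on `E_N = {i/N : 0 ≤ i ≤ N}` with
rates `r⁺, r⁻` vanishing at `0` and satisfying the drift condition
`r⁻(x) ≥ (1+δ) r⁺(x)` on `E_N ∩ (0, 2ε̄]`, started at `x < ε̄`, the probability
of ever exceeding `2ε̄` is less than `ε̄ N e^{-ε̄ C N}` with `C = log(1+δ)`.
The process is encoded through its embedded jump chain `Y`: from a state `s`
with `r⁺(s) + r⁻(s) > 0` it moves to `s ± 1/N` with probabilities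
`r±(s)/(r⁺(s)+r⁻(s))`, and states with zero total rate are absorbing; the
event `sup_{t≥0} X(t) > 2ε̄` coincides with `∃ m, Y m > 2ε̄`. -/
theorem stmt17 (N : ℕ) (hN : 0 < N)
    (rp rm : ℝ → ℝ) (hrp : ∀ x, 0 ≤ rp x) (hrm : ∀ x, 0 ≤ rm x)
    (hrp0 : rp 0 = 0) (hrm0 : rm 0 = 0)
    (εb δ : ℝ) (hεb : 0 < εb) (hδ : 0 < δ)
    (hdrift : ∀ x : ℝ, (∃ i : ℕ, i ≤ N ∧ x = (i : ℝ) / N) →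
      0 < x → x ≤ 2*εb → (1+δ) * rp x ≤ rm x)
    (Ω : Type*) [MeasurableSpace Ω] (P : Measure Ω) [IsProbabilityMeasure P]
    (Y : ℕ → Ω → ℝ) (hmeas : ∀ m, Measurable (Y m))
    (x : ℝ) (hxE : ∃ i : ℕ, i ≤ N ∧ x = (i : ℝ) / N) (hx : x < εb)
    (hinit : ∀ᵐ ω ∂P, Y 0 ω = x)
    (hstate : ∀ m, ∀ᵐ ω ∂P, ∃ i : ℕ, i ≤ N ∧ Y m ω = (i : ℝ) / N)
    (hup : ∀ m : ℕ, ∀ s : ℝ, rp s + rm s ≠ 0 →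
      P {ω | Y (m+1) ω = s + 1/N ∧ Y m ω = s}
        = ENNReal.ofReal (rp s / (rp s + rm s)) * P {ω | Y m ω = s})
    (hdown : ∀ m : ℕ, ∀ s : ℝ, rp s + rm s ≠ 0 →
      P {ω | Y (m+1) ω = s - 1/N ∧ Y m ω = s}
        = ENNReal.ofReal (rm s / (rp s + rm s)) * P {ω | Y m ω = s})
    (habs : ∀ m : ℕ, ∀ s : ℝ, rp s + rm s = 0 →
      P {ω | Y (m+1) ω = s ∧ Y m ω = s} = P {ω | Y m ω = s}) :
    P {ω | ∃ m : ℕ, Y m ω > 2*εb}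
      < ENNReal.ofReal (εb * N * Real.exp (-(εb * Real.log (1+δ) * N))) := by
  have hNR : (0:ℝ) < (N:ℝ) := Nat.cast_pos.mpr hN
  have hNne : (N:ℝ) ≠ 0 := hNR.ne'
  have hinvN : (0:ℝ) < 1/(N:ℝ) := by positivity
  obtain ⟨i0, hi0N, hxeq⟩ := hxE
  set n := Nat.floor (2*εb*(N:ℝ)) with hndef
  have hinj : ∀ i j : ℕ, (i:ℝ)/N = (j:ℝ)/N → i = j := by
    intro i j h
    field_simp at h
    exact_mod_cast h
  have hms : ∀ (m:ℕ) (t:ℝ), MeasurableSet {ω | Y m ω = t} :=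
    fun m t => hmeas m (measurableSet_singleton t)
  have hms2 : ∀ (m:ℕ) (t s : ℝ), MeasurableSet {ω | Y (m+1) ω = t ∧ Y m ω = s} :=
    fun m t s => (hms (m+1) t).inter (hms m s)
  -- partition lemma
  have hpart : ∀ (m:ℕ) (E : Set Ω), MeasurableSet E →
      P E = ∑ i ∈ Finset.range (N+1), P (E ∩ {ω | Y m ω = (i:ℝ)/N}) := by
    intro m E hE
    set U : Set Ω := ⋃ i ∈ Finset.range (N+1), {ω | Y m ω = (i:ℝ)/N} with hUdef
    have hU : MeasurableSet U :=
      (Finset.range (N+1)).measurableSet_biUnion (fun i _ => hms m _)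
    have hUc : P Uᶜ = 0 := by
      have h := hstate m
      rw [ae_iff] at h
      refine measure_mono_null ?_ h
      intro ω hω
      intro hex
      obtain ⟨i, hiN, hY⟩ := hex
      exact hω (Set.mem_biUnion (Finset.mem_range.mpr (Nat.lt_succ_of_le hiN)) hY)
    have h2 := measure_inter_add_diff (μ := P) E hU
    have h3 : P (E \ U) = 0 :=
      measure_mono_null (fun ω hω => hω.2) hUc
    have h1 : P E = P (E ∩ U) := by rw [← h2, h3, add_zero]
    rw [h1, hUdef, Set.inter_iUnion₂]
    refine measure_biUnion_finset ?_ (fun i _ => hE.inter (hms m _))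
    intro i _ j _ hij
    refine Set.disjoint_left.mpr ?_
    rintro ω ⟨_, h1⟩ ⟨_, h2⟩
    exact hij (hinj i j (h1.symm.trans h2))
  -- good-step lemma
  have hgood : ∀ m : ℕ, ∀ᵐ ω ∂P, ∀ j : ℕ, j ≤ N → Y m ω = (j:ℝ)/N →
      ((rp ((j:ℝ)/N) + rm ((j:ℝ)/N) = 0 ∧ Y (m+1) ω = (j:ℝ)/N) ∨
       (rp ((j:ℝ)/N) + rm ((j:ℝ)/N) ≠ 0 ∧
         (Y (m+1) ω = (j:ℝ)/N + 1/N ∨ Y (m+1) ω = (j:ℝ)/N - 1/N))) := by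
    intro m
    rw [ae_iff]
    refine measure_mono_null (?_ :
      _ ⊆ ⋃ j ∈ Finset.range (N+1), ({ω | Y m ω = (j:ℝ)/N} \
        {ω | (rp ((j:ℝ)/N) + rm ((j:ℝ)/N) = 0 ∧ Y (m+1) ω = (j:ℝ)/N) ∨
          (rp ((j:ℝ)/N) + rm ((j:ℝ)/N) ≠ 0 ∧
            (Y (m+1) ω = (j:ℝ)/N + 1/N ∨ Y (m+1) ω = (j:ℝ)/N - 1/N))})) ?_
    · intro ω hω
      simp only [Set.mem_setOf_eq, not_forall] at hω
      obtain ⟨j, hjN, hYj, hbad⟩ := hω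
      simp only [Set.mem_iUnion, Finset.mem_range]
      exact ⟨j, Nat.lt_succ_of_le hjN, hYj, hbad⟩
    · refine le_antisymm (le_trans (measure_biUnion_finset_le _ _)
        (le_of_eq (Finset.sum_eq_zero ?_))) (by simp)
      intro j _
      by_cases hr : rp ((j:ℝ)/N) + rm ((j:ℝ)/N) = 0
      · have hD := habs m ((j:ℝ)/N) hr
        have hsub : {ω | Y (m+1) ω = (j:ℝ)/N ∧ Y m ω = (j:ℝ)/N} ⊆ {ω | Y m ω = (j:ℝ)/N} :=
          fun ω hω => hω.2
        have hinter := measure_inter_add_diff (μ := P) {ω | Y m ω = (j:ℝ)/N}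
          (hms2 m ((j:ℝ)/N) ((j:ℝ)/N))
        rw [Set.inter_eq_self_of_subset_right hsub, hD] at hinter
        have hzero : P ({ω | Y m ω = (j:ℝ)/N} \
            {ω | Y (m+1) ω = (j:ℝ)/N ∧ Y m ω = (j:ℝ)/N}) = 0 :=
          (ENNReal.add_right_inj (measure_ne_top P {ω | Y m ω = (j:ℝ)/N})).mp (by rw [hinter, add_zero])
        refine measure_mono_null ?_ hzero
        rintro ω ⟨h1, h2⟩
        exact ⟨h1, fun hc => h2 (Or.inl ⟨hr, hc.1⟩)⟩
      · have hDu := hup m ((j:ℝ)/N) hr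
        have hDd := hdown m ((j:ℝ)/N) hr
        have hrs : 0 < rp ((j:ℝ)/N) + rm ((j:ℝ)/N) :=
          lt_of_le_of_ne (add_nonneg (hrp _) (hrm _)) (Ne.symm hr)
        have hpq : rp ((j:ℝ)/N)/(rp ((j:ℝ)/N)+rm ((j:ℝ)/N))
            + rm ((j:ℝ)/N)/(rp ((j:ℝ)/N)+rm ((j:ℝ)/N)) = 1 := by
          field_simp
        have hdisj : Disjoint {ω | Y (m+1) ω = (j:ℝ)/N + 1/N ∧ Y m ω = (j:ℝ)/N}
            {ω | Y (m+1) ω = (j:ℝ)/N - 1/N ∧ Y m ω = (j:ℝ)/N} := by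
          refine Set.disjoint_left.mpr ?_
          rintro ω ⟨h1, _⟩ ⟨h2, _⟩
          rw [h1] at h2
          linarith
        have hunion : P ({ω | Y (m+1) ω = (j:ℝ)/N + 1/N ∧ Y m ω = (j:ℝ)/N} ∪
            {ω | Y (m+1) ω = (j:ℝ)/N - 1/N ∧ Y m ω = (j:ℝ)/N}) = P {ω | Y m ω = (j:ℝ)/N} := by
          rw [measure_union hdisj (hms2 m _ _), hDu, hDd, ← add_mul,
            ← ENNReal.ofReal_add (div_nonneg (hrp _) hrs.le) (div_nonneg (hrm _) hrs.le), hpq,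
            ENNReal.ofReal_one, one_mul]
        have hsub : ({ω | Y (m+1) ω = (j:ℝ)/N + 1/N ∧ Y m ω = (j:ℝ)/N} ∪
            {ω | Y (m+1) ω = (j:ℝ)/N - 1/N ∧ Y m ω = (j:ℝ)/N}) ⊆ {ω | Y m ω = (j:ℝ)/N} :=
          fun ω hω => hω.elim (fun h => h.2) (fun h => h.2)
        have hinter := measure_inter_add_diff (μ := P) {ω | Y m ω = (j:ℝ)/N}
          ((hms2 m ((j:ℝ)/N + 1/N) ((j:ℝ)/N)).union (hms2 m ((j:ℝ)/N - 1/N) ((j:ℝ)/N)))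
        rw [Set.inter_eq_self_of_subset_right hsub, hunion] at hinter
        have hzero : P ({ω | Y m ω = (j:ℝ)/N} \
            ({ω | Y (m+1) ω = (j:ℝ)/N + 1/N ∧ Y m ω = (j:ℝ)/N} ∪
             {ω | Y (m+1) ω = (j:ℝ)/N - 1/N ∧ Y m ω = (j:ℝ)/N})) = 0 :=
          (ENNReal.add_right_inj (measure_ne_top P {ω | Y m ω = (j:ℝ)/N})).mp (by rw [hinter, add_zero])
        refine measure_mono_null ?_ hzero
        rintro ω ⟨h1, h2⟩
        refine ⟨h1, fun hc => ?_⟩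
        rcases hc with hc | hc
        · exact h2 (Or.inr ⟨hr, Or.inl hc.1⟩)
        · exact h2 (Or.inr ⟨hr, Or.inr hc.1⟩)
  -- vanishing of off-diagonal transition probabilities
  have hJnull0 : ∀ (m j i : ℕ), j ≤ N → rp ((j:ℝ)/N) + rm ((j:ℝ)/N) = 0 → i ≠ j →
      P {ω | Y (m+1) ω = (i:ℝ)/N ∧ Y m ω = (j:ℝ)/N} = 0 := by
    intro m j i hjN hr hij
    refine measure_mono_null ?_ (ae_iff.mp (hgood m))
    rintro ω ⟨h1, h2⟩
    intro hall
    rcases hall j hjN h2 with ⟨_, heq⟩ | ⟨hne, _⟩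
    · exact hij (hinj i j (h1.symm.trans heq))
    · exact hne hr
  have hJnullud : ∀ (m j i : ℕ), j ≤ N → rp ((j:ℝ)/N) + rm ((j:ℝ)/N) ≠ 0 → 1 ≤ j →
      i ≠ j+1 → i ≠ j-1 →
      P {ω | Y (m+1) ω = (i:ℝ)/N ∧ Y m ω = (j:ℝ)/N} = 0 := by
    intro m j i hjN hr hj1 hij1 hij2
    refine measure_mono_null ?_ (ae_iff.mp (hgood m))
    rintro ω ⟨h1, h2⟩
    intro hall
    rcases hall j hjN h2 with ⟨hz, _⟩ | ⟨_, hu | hd⟩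
    · exact hr hz
    · refine hij1 (hinj i (j+1) ?_)
      rw [h1.symm.trans hu]
      push_cast
      ring
    · refine hij2 (hinj i (j-1) ?_)
      rw [h1.symm.trans hd, Nat.cast_sub hj1]
      push_cast
      ring
  -- per-state one-step inequality
  have hkey : ∀ (m j : ℕ), j ≤ N →
      (∑ i ∈ Finset.range (N+1), ENNReal.ofReal (a17 δ n i) *
          P {ω | Y (m+1) ω = (i:ℝ)/N ∧ Y m ω = (j:ℝ)/N})
        + (if j = n then ENNReal.ofReal (δ*(1+δ)^n) *
            P {ω | Y (m+1) ω = ((n:ℝ)+1)/N ∧ Y m ω = (n:ℝ)/N} else 0)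
      ≤ ENNReal.ofReal (a17 δ n j) * P {ω | Y m ω = (j:ℝ)/N} := by
    intro m j hjN
    by_cases hr : rp ((j:ℝ)/N) + rm ((j:ℝ)/N) = 0
    · have hsum : (∑ i ∈ Finset.range (N+1), ENNReal.ofReal (a17 δ n i) *
          P {ω | Y (m+1) ω = (i:ℝ)/N ∧ Y m ω = (j:ℝ)/N})
          = ENNReal.ofReal (a17 δ n j) * P {ω | Y m ω = (j:ℝ)/N} := by
        rw [Finset.sum_eq_single j]
        · rw [habs m ((j:ℝ)/N) hr]
        · intro i _ hij
          rw [hJnull0 m j i hjN hr hij, mul_zero]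
        · intro hmem
          exact absurd (Finset.mem_range.mpr (Nat.lt_succ_of_le hjN)) hmem
      rw [hsum]
      rcases eq_or_ne j n with heq | hne
      · rw [if_pos heq]
        have hPC : P {ω | Y (m+1) ω = ((n:ℝ)+1)/N ∧ Y m ω = (n:ℝ)/N} = 0 := by
          have hcast : ((n:ℝ)+1)/N = ((n+1:ℕ):ℝ)/N := by push_cast; ring
          rw [hcast, ← heq]
          exact hJnull0 m j (j+1) hjN hr (by omega)
        rw [hPC, mul_zero, add_zero]
      · rw [if_neg hne, add_zero]
    · -- moving case
      have hj1 : 1 ≤ j := by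
        rcases Nat.eq_zero_or_pos j with rfl | h
        · exfalso
          apply hr
          rw [Nat.cast_zero, zero_div, hrp0, hrm0, add_zero]
        · exact h
      have hrs : 0 < rp ((j:ℝ)/N) + rm ((j:ℝ)/N) :=
        lt_of_le_of_ne (add_nonneg (hrp _) (hrm _)) (Ne.symm hr)
      have hp0 : 0 ≤ rp ((j:ℝ)/N) / (rp ((j:ℝ)/N)+rm ((j:ℝ)/N)) := div_nonneg (hrp _) hrs.le
      have hq0 : 0 ≤ rm ((j:ℝ)/N) / (rp ((j:ℝ)/N)+rm ((j:ℝ)/N)) := div_nonneg (hrm _) hrs.le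
      have hpq : rp ((j:ℝ)/N)/(rp ((j:ℝ)/N)+rm ((j:ℝ)/N))
          + rm ((j:ℝ)/N)/(rp ((j:ℝ)/N)+rm ((j:ℝ)/N)) = 1 := by
        rw [← add_div, div_self hr]
      have hval1 : ((j+1:ℕ):ℝ)/N = (j:ℝ)/N + 1/N := by push_cast; ring
      have hval2 : ((j-1:ℕ):ℝ)/N = (j:ℝ)/N - 1/N := by
        rw [Nat.cast_sub hj1]; push_cast; ring
      have hdr : j ≤ n → (1+δ) * (rp ((j:ℝ)/N)/(rp ((j:ℝ)/N)+rm ((j:ℝ)/N)))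
          ≤ rm ((j:ℝ)/N)/(rp ((j:ℝ)/N)+rm ((j:ℝ)/N)) := by
        intro hjn
        have hj2e : (j:ℝ) ≤ 2*εb*N :=
          le_trans (Nat.cast_le.mpr hjn) (Nat.floor_le (by positivity))
        have hd := hdrift ((j:ℝ)/N) ⟨j, hjN, rfl⟩
          (div_pos (by exact_mod_cast hj1) hNR) ((div_le_iff₀ hNR).mpr hj2e)
        rw [← mul_div_assoc]
        exact div_le_div_of_nonneg_right hd hrs.le
      have hPup := hup m ((j:ℝ)/N) hr
      have hPdn := hdown m ((j:ℝ)/N) hr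
      have hvan : ∀ i ∈ Finset.range (N+1),
          ENNReal.ofReal (a17 δ n i) * P {ω | Y (m+1) ω = (i:ℝ)/N ∧ Y m ω = (j:ℝ)/N} ≠ 0 →
          i = j+1 ∨ i = j-1 := by
        intro i _ hne0
        by_contra hcon
        push_neg at hcon
        rw [hJnullud m j i hjN hr hj1 hcon.1 hcon.2, mul_zero] at hne0
        exact hne0 rfl
      have hsumle : (∑ i ∈ Finset.range (N+1), ENNReal.ofReal (a17 δ n i) *
            P {ω | Y (m+1) ω = (i:ℝ)/N ∧ Y m ω = (j:ℝ)/N})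
          ≤ ENNReal.ofReal (a17 δ n (j+1)) *
              P {ω | Y (m+1) ω = (j:ℝ)/N + 1/N ∧ Y m ω = (j:ℝ)/N}
            + ENNReal.ofReal (a17 δ n (j-1)) *
              P {ω | Y (m+1) ω = (j:ℝ)/N - 1/N ∧ Y m ω = (j:ℝ)/N} := by
        rw [← Finset.sum_filter_of_ne hvan]
        refine le_trans (Finset.sum_le_sum_of_subset (fun i hi => ?_) :
            _ ≤ ∑ i ∈ ({j+1, j-1} : Finset ℕ), ENNReal.ofReal (a17 δ n i) *
              P {ω | Y (m+1) ω = (i:ℝ)/N ∧ Y m ω = (j:ℝ)/N}) ?_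
        · rw [Finset.mem_filter] at hi
          rcases hi.2 with h | h <;> simp [h]
        · rw [Finset.sum_insert (by simp; omega), Finset.sum_singleton, hval1, hval2]
      have hfin : ∀ A B C : ℝ, 0 ≤ A → 0 ≤ B → 0 ≤ C →
          A * (rp ((j:ℝ)/N)/(rp ((j:ℝ)/N)+rm ((j:ℝ)/N)))
            + B * (rm ((j:ℝ)/N)/(rp ((j:ℝ)/N)+rm ((j:ℝ)/N)))
            + C * (rp ((j:ℝ)/N)/(rp ((j:ℝ)/N)+rm ((j:ℝ)/N))) ≤ a17 δ n j →
          ENNReal.ofReal A * (ENNReal.ofReal (rp ((j:ℝ)/N)/(rp ((j:ℝ)/N)+rm ((j:ℝ)/N)))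
              * P {ω | Y m ω = (j:ℝ)/N})
            + ENNReal.ofReal B * (ENNReal.ofReal (rm ((j:ℝ)/N)/(rp ((j:ℝ)/N)+rm ((j:ℝ)/N)))
              * P {ω | Y m ω = (j:ℝ)/N})
            + ENNReal.ofReal C * (ENNReal.ofReal (rp ((j:ℝ)/N)/(rp ((j:ℝ)/N)+rm ((j:ℝ)/N)))
              * P {ω | Y m ω = (j:ℝ)/N})
          ≤ ENNReal.ofReal (a17 δ n j) * P {ω | Y m ω = (j:ℝ)/N} := by
        intro A B C hA hB hC hle
        rw [← mul_assoc, ← mul_assoc, ← mul_assoc, ← ENNReal.ofReal_mul hA,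
          ← ENNReal.ofReal_mul hB, ← ENNReal.ofReal_mul hC, ← add_mul, ← add_mul,
          ← ENNReal.ofReal_add (mul_nonneg hA hp0) (mul_nonneg hB hq0),
          ← ENNReal.ofReal_add (add_nonneg (mul_nonneg hA hp0) (mul_nonneg hB hq0))
            (mul_nonneg hC hp0)]
        exact mul_le_mul_left (ENNReal.ofReal_le_ofReal hle) _
      have hcoeff := step_coeff δ hδ n j hj1 _ _ hp0 hq0 hpq hdr
      rcases eq_or_ne j n with heq | hne
      · subst heq
        rw [if_pos rfl]
        have hvalC : ((n:ℝ)+1)/N = (n:ℝ)/N + 1/N := by ring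
        rw [hvalC]
        refine le_trans (add_le_add_left hsumle _) ?_
        rw [hPup, hPdn]
        refine hfin (a17 δ n (n+1)) (a17 δ n (n-1)) (δ*(1+δ)^n)
          (a17_nonneg δ hδ n _) (a17_nonneg δ hδ n _) (by positivity) ?_
        rw [if_pos rfl] at hcoeff
        linarith [hcoeff]
      · rw [if_neg hne, add_zero]
        refine le_trans hsumle ?_
        rw [hPup, hPdn]
        have h0 := hfin (a17 δ n (j+1)) (a17 δ n (j-1)) 0
          (a17_nonneg δ hδ n _) (a17_nonneg δ hδ n _) le_rfl ?_
        · simpa using h0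
        · rw [if_neg hne] at hcoeff
          linarith [hcoeff]
  -- one-step supermartingale inequality for the aggregated sums
  have hGstep : ∀ m : ℕ,
      (∑ i ∈ Finset.range (N+1), ENNReal.ofReal (a17 δ n i) * P {ω | Y (m+1) ω = (i:ℝ)/N})
        + ENNReal.ofReal (δ*(1+δ)^n) * P {ω | Y (m+1) ω = ((n:ℝ)+1)/N ∧ Y m ω = (n:ℝ)/N}
      ≤ ∑ i ∈ Finset.range (N+1), ENNReal.ofReal (a17 δ n i) * P {ω | Y m ω = (i:ℝ)/N} := by
    intro m
    have hdecomp : ∀ i : ℕ, P {ω | Y (m+1) ω = (i:ℝ)/N}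
        = ∑ j ∈ Finset.range (N+1),
            P {ω | Y (m+1) ω = (i:ℝ)/N ∧ Y m ω = (j:ℝ)/N} := by
      intro i
      exact hpart m {ω | Y (m+1) ω = (i:ℝ)/N} (hms (m+1) _)
    have hswap : (∑ i ∈ Finset.range (N+1), ENNReal.ofReal (a17 δ n i) *
          P {ω | Y (m+1) ω = (i:ℝ)/N})
        = ∑ j ∈ Finset.range (N+1), ∑ i ∈ Finset.range (N+1),
            ENNReal.ofReal (a17 δ n i) * P {ω | Y (m+1) ω = (i:ℝ)/N ∧ Y m ω = (j:ℝ)/N} := by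
      rw [Finset.sum_comm]
      refine Finset.sum_congr rfl fun i _ => ?_
      rw [hdecomp i, Finset.mul_sum]
    by_cases hnN : n ≤ N
    · have hite : ENNReal.ofReal (δ*(1+δ)^n) *
          P {ω | Y (m+1) ω = ((n:ℝ)+1)/N ∧ Y m ω = (n:ℝ)/N}
          = ∑ j ∈ Finset.range (N+1), (if j = n then ENNReal.ofReal (δ*(1+δ)^n) *
              P {ω | Y (m+1) ω = ((n:ℝ)+1)/N ∧ Y m ω = (n:ℝ)/N} else 0) := by
        rw [Finset.sum_ite_eq' (Finset.range (N+1)) n,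
          if_pos (Finset.mem_range.mpr (Nat.lt_succ_of_le hnN))]
      rw [hswap, hite, ← Finset.sum_add_distrib]
      exact Finset.sum_le_sum fun j hj =>
        hkey m j (Nat.lt_succ_iff.mp (Finset.mem_range.mp hj))
    · have hPC0 : P {ω | Y (m+1) ω = ((n:ℝ)+1)/N ∧ Y m ω = (n:ℝ)/N} = 0 := by
        have h1 : P {ω | Y m ω = (n:ℝ)/N} = 0 := by
          rw [hpart m _ (hms m _)]
          refine Finset.sum_eq_zero fun i hi => ?_
          have hempty : {ω | Y m ω = (n:ℝ)/N} ∩ {ω | Y m ω = (i:ℝ)/N} = ∅ := by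
            ext ω
            simp only [Set.mem_inter_iff, Set.mem_setOf_eq, Set.mem_empty_iff_false,
              iff_false, not_and]
            intro ha hb
            have := hinj n i (ha.symm.trans hb)
            rw [Finset.mem_range] at hi
            omega
          rw [hempty, measure_empty]
        exact measure_mono_null (fun ω hω => hω.2) h1
      rw [hPC0, mul_zero, add_zero, hswap]
      refine Finset.sum_le_sum fun j hj => ?_
      have hj' := Nat.lt_succ_iff.mp (Finset.mem_range.mp hj)
      have hk := hkey m j hj'
      rw [if_neg (by omega : ¬ j = n), add_zero] at hk
      exact hk
  -- telescoping
  have htel : ∀ M : ℕ,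
      (∑ m ∈ Finset.range M, ENNReal.ofReal (δ*(1+δ)^n) *
          P {ω | Y (m+1) ω = ((n:ℝ)+1)/N ∧ Y m ω = (n:ℝ)/N})
        + (∑ i ∈ Finset.range (N+1), ENNReal.ofReal (a17 δ n i) * P {ω | Y M ω = (i:ℝ)/N})
      ≤ ∑ i ∈ Finset.range (N+1), ENNReal.ofReal (a17 δ n i) * P {ω | Y 0 ω = (i:ℝ)/N} := by
    intro M
    induction M with
    | zero => simp
    | succ M ih =>
      rw [Finset.sum_range_succ]
      have habc : ∀ a b c d e : ENNReal, c + b ≤ d → a + d ≤ e → (a + b) + c ≤ e := by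
        intro a b c d e h1 h2
        calc (a + b) + c = a + (c + b) := by ring
          _ ≤ a + d := add_le_add_right h1 a
          _ ≤ e := h2
      exact habc _ _ _ _ _ (hGstep M) ih
  -- initial value
  have hG0 : (∑ i ∈ Finset.range (N+1), ENNReal.ofReal (a17 δ n i) * P {ω | Y 0 ω = (i:ℝ)/N})
      = ENNReal.ofReal (a17 δ n i0) := by
    have hx0 : ∀ i : ℕ, i ≠ i0 → P {ω | Y 0 ω = (i:ℝ)/N} = 0 := by
      intro i hi
      refine measure_mono_null ?_ (ae_iff.mp hinit)
      intro ω hω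
      simp only [Set.mem_setOf_eq] at hω ⊢
      intro hcon
      rw [hxeq] at hcon
      exact hi (hinj i i0 (hω.symm.trans hcon))
    have hx1 : P {ω | Y 0 ω = (i0:ℝ)/N} = 1 := by
      have hc : P {ω | Y 0 ω = x}ᶜ = 0 := by
        rw [Set.compl_setOf]
        exact ae_iff.mp hinit
      have := (prob_compl_eq_zero_iff (hms 0 x)).mp hc
      rw [hxeq] at this
      exact this
    rw [Finset.sum_eq_single i0]
    · rw [hx1, mul_one]
    · intro i _ hi
      rw [hx0 i hi, mul_zero]
    · intro h
      exact absurd (Finset.mem_range.mpr (Nat.lt_succ_of_le hi0N)) h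
  -- sum of crossing probabilities is small
  have hcpos : (0:ℝ) < δ*(1+δ)^n := by positivity
  have htsum : (∑' m : ℕ, ENNReal.ofReal (δ*(1+δ)^n) *
      P {ω | Y (m+1) ω = ((n:ℝ)+1)/N ∧ Y m ω = (n:ℝ)/N}) ≤ ENNReal.ofReal (a17 δ n i0) := by
    refine ENNReal.tsum_le_of_sum_range_le fun M => ?_
    refine le_trans le_self_add ((htel M).trans_eq ?_)
    exact hG0
  rw [ENNReal.tsum_mul_left] at htsum
  have hPCsum : (∑' m : ℕ, P {ω | Y (m+1) ω = ((n:ℝ)+1)/N ∧ Y m ω = (n:ℝ)/N})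
      ≤ ENNReal.ofReal (a17 δ n i0) / ENNReal.ofReal (δ*(1+δ)^n) := by
    rw [ENNReal.le_div_iff_mul_le
      (Or.inl (by simp only [ne_eq, ENNReal.ofReal_eq_zero, not_le]; exact hcpos))
      (Or.inl ENNReal.ofReal_ne_top), mul_comm]
    exact htsum
  -- pathwise first-crossing argument
  have hpath : P {ω | ∃ m : ℕ, Y m ω > 2*εb}
      ≤ ∑' m : ℕ, P {ω | Y (m+1) ω = ((n:ℝ)+1)/N ∧ Y m ω = (n:ℝ)/N} := by
    refine le_trans (measure_mono_ae ?_) (measure_iUnion_le _)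
    have hae := hinit.and ((MeasureTheory.ae_all_iff.mpr hstate).and
      (MeasureTheory.ae_all_iff.mpr hgood))
    filter_upwards [hae] with ω hω hmem
    obtain ⟨h0, hst, hgd⟩ := hω
    have hex : ∃ m, Y m ω > 2*εb := hmem
    have hspec := Nat.find_spec hex
    have hm0 : Nat.find hex ≠ 0 := by
      intro h
      rw [h, h0] at hspec
      linarith
    obtain ⟨m', hm'⟩ : ∃ m', Nat.find hex = m'+1 := ⟨Nat.find hex - 1, by omega⟩
    have hprev : ¬ (Y m' ω > 2*εb) := Nat.find_min hex (by omega)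
    push_neg at hprev
    obtain ⟨j, hjN, hYj⟩ := hst m'
    have hcur : Y (m'+1) ω > 2*εb := by rw [← hm']; exact hspec
    rcases hgd m' j hjN hYj with ⟨_, heq⟩ | ⟨_, hu | hd⟩
    · exfalso
      have : Y (m'+1) ω = Y m' ω := heq.trans hYj.symm
      linarith
    · have hjle : (j:ℝ)/N ≤ 2*εb := by rw [← hYj]; exact hprev
      have hjle' : (j:ℝ) ≤ 2*εb*N := (div_le_iff₀ hNR).mp hjle
      have hjn : j ≤ n := Nat.le_floor hjle'
      have hjeqn : j = n := by
        by_contra hne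
        have hj1n : j+1 ≤ n := by omega
        have hcast : ((j:ℝ)+1) ≤ 2*εb*N := by
          calc ((j:ℝ)+1) = ((j+1:ℕ):ℝ) := by push_cast; ring
            _ ≤ (n:ℝ) := Nat.cast_le.mpr hj1n
            _ ≤ 2*εb*N := Nat.floor_le (by positivity)
        have hYle : Y (m'+1) ω ≤ 2*εb := by
          rw [hu, ← add_div]
          exact (div_le_iff₀ hNR).mpr hcast
        linarith
      refine Set.mem_iUnion.mpr ⟨m', ?_, ?_⟩
      · rw [hu, hjeqn, ← add_div]
      · rw [hYj, hjeqn]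
    · exfalso
      have : Y (m'+1) ω = Y m' ω - 1/N := by rw [hd, ← hYj]
      linarith
  -- conclusion
  have hi0lt : (i0:ℝ) < εb*N := by
    rw [hxeq] at hx
    exact (div_lt_iff₀ hNR).mp hx
  have hmin : min i0 n = i0 := by
    refine min_eq_left (Nat.le_floor ?_)
    nlinarith [mul_pos hεb hNR]
  have hRpos : (0:ℝ) < εb * N * Real.exp (-(εb * Real.log (1+δ) * N)) := by positivity
  calc P {ω | ∃ m : ℕ, Y m ω > 2*εb}
      ≤ ∑' m : ℕ, P {ω | Y (m+1) ω = ((n:ℝ)+1)/N ∧ Y m ω = (n:ℝ)/N} := hpath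
    _ ≤ ENNReal.ofReal (a17 δ n i0) / ENNReal.ofReal (δ*(1+δ)^n) := hPCsum
    _ = ENNReal.ofReal (a17 δ n i0 / (δ*(1+δ)^n)) := (ENNReal.ofReal_div_of_pos hcpos).symm
    _ < ENNReal.ofReal (εb * N * Real.exp (-(εb * Real.log (1+δ) * N))) := by
        rw [ENNReal.ofReal_lt_ofReal_iff hRpos]
        have hfin := final17 δ εb N hδ hεb hN i0 hi0lt
        rw [← hndef] at hfin
        simpa only [a17, hmin] using hfin
end
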